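/- arXiv:0710.2719 — 5 statements merged into one kernel-verified Lean document; each statement's English description precedes it below -/
import Mathlib

section
/- Let V be a real vector space with complex structures I₁, I₂, I₃, a skew map Q : V* → V, and skew maps F₁₂, F₂₃ : V → V* satisfying I₂ - I₁ = Q∘F₁₂, F₁₂∘I₂ + I₁*∘F₁₂ = 0, I₃ - I₂ = Q∘F₂₃, and F₂₃∘I₃ + I₂*∘F₂₃ = 0. Then F₁₃ := F₁₂ + F₂₃ satisfies I₃ - I₁ = Q∘F₁₃ and F₁₃∘I₃ + I₁*∘F₁₃ = 0. -/
/-- Morphisms in the groupoid of Courant trivializations compose by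
addition of the 2-forms: if `(I₁,I₂,Q,F₁₂)` and `(I₂,I₃,Q,F₂₃)` satisfy the
compatibility equations, then so does `(I₁,I₃,Q,F₁₂+F₂₃)`. -/
theorem stmt1 (V : Type*) [AddCommGroup V] [Module ℝ V] [FiniteDimensional ℝ V]
    (I₁ I₂ I₃ : V →ₗ[ℝ] V) (Q : Module.Dual ℝ V →ₗ[ℝ] V)
    (F₁₂ F₂₃ : V →ₗ[ℝ] Module.Dual ℝ V)
    (hI₁ : I₁ ∘ₗ I₁ = -LinearMap.id) (hI₂ : I₂ ∘ₗ I₂ = -LinearMap.id)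
    (hI₃ : I₃ ∘ₗ I₃ = -LinearMap.id)
    (hQ : ∀ ξ η : Module.Dual ℝ V, ξ (Q η) = - η (Q ξ))
    (hF₁₂ : ∀ x y : V, F₁₂ x y = - F₁₂ y x)
    (hF₂₃ : ∀ x y : V, F₂₃ x y = - F₂₃ y x)
    (h12a : I₂ - I₁ = Q ∘ₗ F₁₂)
    (h12b : F₁₂ ∘ₗ I₂ + I₁.dualMap ∘ₗ F₁₂ = 0)
    (h23a : I₃ - I₂ = Q ∘ₗ F₂₃)
    (h23b : F₂₃ ∘ₗ I₃ + I₂.dualMap ∘ₗ F₂₃ = 0) :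
    I₃ - I₁ = Q ∘ₗ (F₁₂ + F₂₃) ∧
      (F₁₂ + F₂₃) ∘ₗ I₃ + I₁.dualMap ∘ₗ (F₁₂ + F₂₃) = 0 := by
  have h12a' : ∀ x : V, I₂ x - I₁ x = Q (F₁₂ x) := by
    intro x
    have := LinearMap.ext_iff.mp h12a x
    simpa using this
  have h23a' : ∀ x : V, I₃ x - I₂ x = Q (F₂₃ x) := by
    intro x
    have := LinearMap.ext_iff.mp h23a x
    simpa using this
  have h12b' : ∀ x y : V, F₁₂ (I₂ x) y + F₁₂ x (I₁ y) = 0 := by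
    intro x y
    have := LinearMap.ext_iff.mp h12b x
    have := LinearMap.ext_iff.mp this y
    simpa [LinearMap.dualMap_apply] using this
  have h23b' : ∀ x y : V, F₂₃ (I₃ x) y + F₂₃ x (I₂ y) = 0 := by
    intro x y
    have := LinearMap.ext_iff.mp h23b x
    have := LinearMap.ext_iff.mp this y
    simpa [LinearMap.dualMap_apply] using this
  constructor
  · ext x
    have h1 := h12a' x
    have h2 := h23a' x
    simp only [LinearMap.sub_apply, LinearMap.comp_apply, LinearMap.add_apply, map_add]
    have : I₃ x - I₁ x = (I₃ x - I₂ x) + (I₂ x - I₁ x) := by abel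
    rw [this, h1, h2]; abel
  · ext x y
    simp only [LinearMap.add_apply, LinearMap.comp_apply, LinearMap.dualMap_apply,
      LinearMap.zero_apply]
    have key : F₁₂ (I₃ x) y - F₁₂ (I₂ x) y + (F₂₃ x (I₁ y) - F₂₃ x (I₂ y)) = 0 := by
      have e1 : F₁₂ (I₃ x) y - F₁₂ (I₂ x) y = F₁₂ (Q (F₂₃ x)) y := by
        rw [← h23a' x, map_sub, LinearMap.sub_apply]
      have e2 : F₂₃ x (I₂ y) - F₂₃ x (I₁ y) = F₂₃ x (Q (F₁₂ y)) := by
        rw [← h12a' y, map_sub]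
      have e3 : F₁₂ (Q (F₂₃ x)) y = - F₁₂ y (Q (F₂₃ x)) := hF₁₂ _ _
      have e4 : F₂₃ x (Q (F₁₂ y)) = - F₁₂ y (Q (F₂₃ x)) := hQ _ _
      linarith
    have k1 := h12b' x y
    have k2 := h23b' x y
    linarith
end

section
/- Let V be a real vector space with complex structures I and J, skew Q : V* → V, and skew F : V → V* satisfying J - I = Q∘F and F∘J + I*∘F = 0. Then the map g := -(1/2)·F∘(I + J) : V → V* is symmetric, i.e. g* = g. -/
/-- Under the compatibility equations `J - I = Q∘F`, `F∘J + I*∘F = 0`,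
the map `g := -(1/2)·F∘(I+J) : V → V*` is symmetric: `g x y = g y x`. -/
theorem stmt2 (V : Type*) [AddCommGroup V] [Module ℝ V] [FiniteDimensional ℝ V]
    (I J : V →ₗ[ℝ] V) (Q : Module.Dual ℝ V →ₗ[ℝ] V) (F : V →ₗ[ℝ] Module.Dual ℝ V)
    (hI : I ∘ₗ I = -LinearMap.id) (hJ : J ∘ₗ J = -LinearMap.id)
    (hQ : ∀ ξ η : Module.Dual ℝ V, ξ (Q η) = - η (Q ξ))
    (hF : ∀ x y : V, F x y = - F y x)
    (h1 : J - I = Q ∘ₗ F)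
    (h2 : F ∘ₗ J + I.dualMap ∘ₗ F = 0) :
    ∀ x y : V, (-((2:ℝ)⁻¹) • (F ∘ₗ (I + J))) x y = (-((2:ℝ)⁻¹) • (F ∘ₗ (I + J))) y x := by
  intro x y
  have hx : F (J x) y + F x (I y) = 0 := by
    have := LinearMap.congr_fun (LinearMap.congr_fun h2 x) y
    simpa [LinearMap.dualMap_apply] using this
  have hy : F (J y) x + F y (I x) = 0 := by
    have := LinearMap.congr_fun (LinearMap.congr_fun h2 y) x
    simpa [LinearMap.dualMap_apply] using this
  have h3 := hF x (I y)
  have h4 := hF y (I x)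
  simp only [LinearMap.smul_apply, LinearMap.comp_apply, LinearMap.add_apply, map_add,
    smul_eq_mul]
  linarith
end

section
/- Let V be a real vector space with complex structures I, J, skew F satisfying J - I = Q∘F and F∘J + I*∘F = 0 (Q skew), with g := -(1/2)F∘(I+J) positive definite (in particular F and I+J are invertible). Then the endomorphism 𝒥_A of V ⊕ V* defined blockwise as 𝒥_A(X + ξ) = -F⁻¹(ξ) + F(X) squares to -1 and is orthogonal for the natural split pairing, and it equals (1/2)·e^{b}∘(J-I, -(ω_J⁻¹+ω_I⁻¹); ω_J+ω_I, -(J*-I*))∘e^{-b}, where b = -(1/2)F(J-I), ω_I = gI, ω_J = gJ, and e^{b}(X+ξ) = X + ξ + b(X). -/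
/-- With `(I,J,Q,F)` satisfying the compatibility equations and
`g = -(1/2)F(I+J)` positive definite, the map `𝒥_A(X+ξ) = -F⁻¹ξ + FX` on `V ⊕ V*`
squares to `-1`, is orthogonal for the split pairing, and equals
`(1/2)·e^b ∘ (J-I, -(ω_J⁻¹+ω_I⁻¹); ω_J+ω_I, -(J*-I*)) ∘ e^{-b}`. -/
theorem stmt6 (V : Type*) [AddCommGroup V] [Module ℝ V] [FiniteDimensional ℝ V]
    (I J : V →ₗ[ℝ] V) (Q : Module.Dual ℝ V →ₗ[ℝ] V) (F : V →ₗ[ℝ] Module.Dual ℝ V)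
    (hI : I ∘ₗ I = -LinearMap.id) (hJ : J ∘ₗ J = -LinearMap.id)
    (hQ : ∀ ξ η : Module.Dual ℝ V, ξ (Q η) = - η (Q ξ))
    (hF : ∀ x y : V, F x y = - F y x)
    (h1 : J - I = Q ∘ₗ F)
    (h2 : F ∘ₗ J + I.dualMap ∘ₗ F = 0)
    (g b ωI ωJ : V →ₗ[ℝ] Module.Dual ℝ V)
    (hg : g = -((2:ℝ)⁻¹) • (F ∘ₗ (I + J)))
    (hb : b = -((2:ℝ)⁻¹) • (F ∘ₗ (J - I)))
    (hωI : ωI = g ∘ₗ I) (hωJ : ωJ = g ∘ₗ J)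
    (hpos : ∀ x : V, x ≠ 0 → 0 < g x x)
    -- inverses of F, ω_I, ω_J
    (Finv ωIinv ωJinv : Module.Dual ℝ V →ₗ[ℝ] V)
    (hFinv₁ : ∀ x : V, Finv (F x) = x) (hFinv₂ : ∀ ξ, F (Finv ξ) = ξ)
    (hωIinv₁ : ∀ x : V, ωIinv (ωI x) = x) (hωIinv₂ : ∀ ξ, ωI (ωIinv ξ) = ξ)
    (hωJinv₁ : ∀ x : V, ωJinv (ωJ x) = x) (hωJinv₂ : ∀ ξ, ωJ (ωJinv ξ) = ξ)
    -- the maps on V ⊕ V*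
    (𝒥A eb enegb M : V × Module.Dual ℝ V → V × Module.Dual ℝ V)
    (h𝒥A : ∀ p : V × Module.Dual ℝ V, 𝒥A p = (-(Finv p.2), F p.1))
    (heb : ∀ p : V × Module.Dual ℝ V, eb p = (p.1, p.2 + b p.1))
    (henegb : ∀ p : V × Module.Dual ℝ V, enegb p = (p.1, p.2 - b p.1))
    (hM : ∀ p : V × Module.Dual ℝ V,
      M p = ((J - I) p.1 - (ωJinv + ωIinv) p.2,
             (ωJ + ωI) p.1 - (J.dualMap - I.dualMap) p.2))
    (pr : V × Module.Dual ℝ V → V × Module.Dual ℝ V → ℝ)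
    (hpr : ∀ p q : V × Module.Dual ℝ V, pr p q = (2:ℝ)⁻¹ * (p.2 q.1 + q.2 p.1)) :
    (∀ p : V × Module.Dual ℝ V, 𝒥A (𝒥A p) = -p) ∧
      (∀ p q : V × Module.Dual ℝ V, pr (𝒥A p) (𝒥A q) = pr p q) ∧
      (∀ p : V × Module.Dual ℝ V, 𝒥A p = (2:ℝ)⁻¹ • eb (M (enegb p))) := by
  -- pointwise squares
  have hJ2 : ∀ v : V, J (J v) = -v := fun v => by
    have := congrFun (congrArg DFunLike.coe hJ) v
    simpa using this
  have hI2 : ∀ v : V, I (I v) = -v := fun v => by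
    have := congrFun (congrArg DFunLike.coe hI) v
    simpa using this
  -- pointwise compatibility r1 : F(Jx)y = -F x (I y)
  have r1 : ∀ x y : V, F (J x) y = - F x (I y) := by
    intro x y
    have h := congrFun (congrArg DFunLike.coe h2) x
    have h' : F (J x) + I.dualMap (F x) = 0 := by simpa using h
    have h'' := congrFun (congrArg DFunLike.coe h') y
    simp only [LinearMap.add_apply, LinearMap.dualMap_apply, LinearMap.zero_apply] at h''
    linarith
  -- r2 : F(Ix)y = -F x (J y)
  have r2 : ∀ x y : V, F (I x) y = - F x (J y) := by
    intro x y
    have e1 := hF (I x) y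
    have e2 := r1 y x
    have e3 := hF (J y) x
    linarith
  -- g is injective
  have ginj : ∀ v : V, g v = 0 → v = 0 := by
    intro v hv
    by_contra hne
    have := hpos v hne
    rw [hv] at this
    simp at this
  -- J ∘ ωJinv = I ∘ ωIinv (both equal g⁻¹)
  have hJI : ∀ ξ : Module.Dual ℝ V, J (ωJinv ξ) = I (ωIinv ξ) := by
    intro ξ
    have e1 : g (J (ωJinv ξ)) = ξ := by
      have : g (J (ωJinv ξ)) = ωJ (ωJinv ξ) := by rw [hωJ]; rfl
      rw [this, hωJinv₂]
    have e2 : g (I (ωIinv ξ)) = ξ := by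
      have : g (I (ωIinv ξ)) = ωI (ωIinv ξ) := by rw [hωI]; rfl
      rw [this, hωIinv₂]
    have : g (J (ωJinv ξ) - I (ωIinv ξ)) = 0 := by
      rw [map_sub, e1, e2, sub_self]
    have := ginj _ this
    exact sub_eq_zero.mp this
  -- F = ωJ + b∘J pointwise
  have hFb1 : ∀ (v : V) (y : V), F v y = ωJ v y + b (J v) y := by
    intro v y
    simp only [hωJ, hg, hb, LinearMap.comp_apply, LinearMap.smul_apply, LinearMap.neg_apply,
      LinearMap.add_apply, LinearMap.sub_apply, map_add, map_sub, hJ2, map_neg,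
      LinearMap.map_smul, smul_eq_mul, LinearMap.smul_apply]
    ring
  -- F = ωI - b∘I pointwise
  have hFb2 : ∀ (v : V) (y : V), F v y = ωI v y - b (I v) y := by
    intro v y
    simp only [hωI, hg, hb, LinearMap.comp_apply, LinearMap.smul_apply, LinearMap.neg_apply,
      LinearMap.add_apply, LinearMap.sub_apply, map_add, map_sub, hI2, map_neg,
      LinearMap.map_smul, smul_eq_mul]
    ring
  -- key1 : F(ωJ⁻¹ξ + ωI⁻¹ξ) = 2ξ pointwise
  have key1 : ∀ (ξ : Module.Dual ℝ V) (y : V), F (ωJinv ξ + ωIinv ξ) y = 2 * ξ y := by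
    intro ξ y
    have a1 := hFb1 (ωJinv ξ) y
    have a2 := hFb2 (ωIinv ξ) y
    rw [hωJinv₂] at a1
    rw [hωIinv₂] at a2
    rw [hJI ξ] at a1
    have : F (ωJinv ξ + ωIinv ξ) y = F (ωJinv ξ) y + F (ωIinv ξ) y := by
      rw [map_add]; rfl
    rw [this, a1, a2]
    ring
  -- F injective
  have hinj : ∀ u w : V, F u = F w → u = w := fun u w h => by
    rw [← hFinv₁ u, h, hFinv₁]
  have key1' : ∀ ξ : Module.Dual ℝ V, ωJinv ξ + ωIinv ξ = (2:ℝ) • Finv ξ := by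
    intro ξ
    apply hinj
    ext y
    rw [key1, map_smul]
    simp [hFinv₂]
  have key2 : ∀ x : V, Finv (b x) = -((2:ℝ)⁻¹) • (J x - I x) := by
    intro x
    have : b x = F (-((2:ℝ)⁻¹) • (J x - I x)) := by
      rw [map_smul, map_sub]
      rw [hb]
      simp only [LinearMap.smul_apply, LinearMap.neg_apply, LinearMap.comp_apply,
        LinearMap.sub_apply, map_sub]
    rw [this, hFinv₁]
  -- key3 : ξ(Jy) - ξ(Iy) = -2 b(F⁻¹ξ) y
  have key3 : ∀ (ξ : Module.Dual ℝ V) (y : V), ξ (J y) - ξ (I y) = -2 * b (Finv ξ) y := by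
    intro ξ y
    have hbv : b (Finv ξ) y = -((2:ℝ)⁻¹) * (F (J (Finv ξ)) y - F (I (Finv ξ)) y) := by
      rw [hb]
      simp only [LinearMap.smul_apply, LinearMap.neg_apply, LinearMap.comp_apply,
        LinearMap.sub_apply, map_sub, smul_eq_mul]
    rw [r1, r2, hFinv₂] at hbv
    rw [hbv]
    ring
  -- key4 : ωJ x y + ωI x y + (b x (Jy) - b x (Iy)) = 2 F x y
  have key4 : ∀ x y : V, ωJ x y + ωI x y + (b x (J y) - b x (I y)) = 2 * F x y := by
    intro x y
    have eωJ : ωJ x y = -((2:ℝ)⁻¹) * (F (I (J x)) y + F (J (J x)) y) := by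
      rw [hωJ, hg]
      simp only [LinearMap.comp_apply, LinearMap.smul_apply, LinearMap.neg_apply,
        LinearMap.add_apply, map_add, smul_eq_mul]
    have eωI : ωI x y = -((2:ℝ)⁻¹) * (F (I (I x)) y + F (J (I x)) y) := by
      rw [hωI, hg]
      simp only [LinearMap.comp_apply, LinearMap.smul_apply, LinearMap.neg_apply,
        LinearMap.add_apply, map_add, smul_eq_mul]
    have ebJ : b x (J y) = -((2:ℝ)⁻¹) * (F (J x) (J y) - F (I x) (J y)) := by
      rw [hb]
      simp only [LinearMap.smul_apply, LinearMap.neg_apply, LinearMap.comp_apply,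
        LinearMap.sub_apply, map_sub, smul_eq_mul]
    have ebI : b x (I y) = -((2:ℝ)⁻¹) * (F (J x) (I y) - F (I x) (I y)) := by
      rw [hb]
      simp only [LinearMap.smul_apply, LinearMap.neg_apply, LinearMap.comp_apply,
        LinearMap.sub_apply, map_sub, smul_eq_mul]
    have t1 : F (I (J x)) y = - F (J x) (J y) := r2 (J x) y
    have t2 : F (J (J x)) y = - F x y := by rw [hJ2, map_neg]; rfl
    have t3 : F (I (I x)) y = - F x y := by rw [hI2, map_neg]; rfl
    have t4 : F (J (I x)) y = - F (I x) (I y) := r1 (I x) y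
    have t5 : F (I x) (J y) = F x y := by
      rw [r2 x (J y), hJ2, map_neg, neg_neg]
    have t6 : F (J x) (I y) = F x y := by
      rw [r1 x (I y), hI2, map_neg, neg_neg]
    rw [eωJ, eωI, ebJ, ebI, t1, t2, t3, t4, t5, t6]
    ring
  refine ⟨?_, ?_, ?_⟩
  · intro p
    rw [h𝒥A, h𝒥A]
    have : (-(Finv p.2), F p.1).2 = F p.1 := rfl
    rw [Prod.ext_iff]
    constructor
    · show -(Finv (F p.1)) = (-p).1
      rw [hFinv₁]; rfl
    · show F (-(Finv p.2)) = (-p).2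
      rw [map_neg, hFinv₂]; rfl
  · intro p q
    rw [hpr, hpr, h𝒥A, h𝒥A]
    have e1 : (F p.1) (-(Finv q.2)) = q.2 p.1 := by
      rw [map_neg, hF p.1 (Finv q.2), hFinv₂]; ring
    have e2 : (F q.1) (-(Finv p.2)) = p.2 q.1 := by
      rw [map_neg, hF q.1 (Finv p.2), hFinv₂]; ring
    show (2:ℝ)⁻¹ * ((F p.1) (-(Finv q.2)) + (F q.1) (-(Finv p.2)))
        = (2:ℝ)⁻¹ * (p.2 q.1 + q.2 p.1)
    rw [e1, e2]; ring
  · intro p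
    rw [h𝒥A, henegb, hM, heb]
    have hA : (J - I) (p.1, p.2 - b p.1).1 - (ωJinv + ωIinv) (p.1, p.2 - b p.1).2
        = (-2:ℝ) • Finv p.2 := by
      show (J - I) p.1 - (ωJinv + ωIinv) (p.2 - b p.1) = (-2:ℝ) • Finv p.2
      rw [LinearMap.add_apply, key1', map_sub, key2, LinearMap.sub_apply]
      module
    have hB : (ωJ + ωI) (p.1, p.2 - b p.1).1 - (J.dualMap - I.dualMap) (p.1, p.2 - b p.1).2
        = (2:ℝ) • F p.1 + (2:ℝ) • b (Finv p.2) := by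
      show (ωJ + ωI) p.1 - (J.dualMap - I.dualMap) (p.2 - b p.1)
          = (2:ℝ) • F p.1 + (2:ℝ) • b (Finv p.2)
      ext y
      simp only [LinearMap.add_apply, LinearMap.sub_apply, LinearMap.dualMap_apply,
        map_sub, LinearMap.smul_apply, smul_eq_mul]
      have k4 := key4 p.1 y
      have k3 := key3 p.2 y
      linarith
    rw [hA, hB]
    have hbA : b ((-2:ℝ) • Finv p.2) = (-2:ℝ) • b (Finv p.2) := by rw [map_smul]
    rw [hbA]
    rw [Prod.ext_iff]
    constructor
    · show -(Finv p.2) = (2:ℝ)⁻¹ • ((-2:ℝ) • Finv p.2)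
      module
    · show F p.1 = (2:ℝ)⁻¹ • ((2:ℝ) • F p.1 + (2:ℝ) • b (Finv p.2) + (-2:ℝ) • b (Finv p.2))
      module
end

section
/- Let 𝒥 : E → E be an orthogonal almost complex structure on a Courant algebroid E, and D a generalized connection on E with D𝒥 = 0 whose torsion T_D is of type (2,1)+(1,2) with respect to 𝒥 (equivalently T_D(𝒥x,𝒥y,z) + T_D(𝒥x,y,𝒥z) + T_D(x,𝒥y,𝒥z) + T_D(x,y,z) = 0 for all x,y,z). Then the Nijenhuis tensor N_𝒥(x,y) = [𝒥x,𝒥y] - 𝒥[𝒥x,y] - 𝒥[x,𝒥y] - [x,y] (with skew-symmetrized brackets) vanishes identically. -/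
/-!  STATEMENT 14:  Let `𝒥` be an orthogonal almost complex structure on a Courant
algebroid `E` and `D` a generalized connection with `D𝒥 = 0` whose torsion is of type
`(2,1)+(1,2)`, i.e. `T(𝒥x,𝒥y,z) + T(𝒥x,y,𝒥z) + T(x,𝒥y,𝒥z) + T(x,y,z) = 0`.
Then the Nijenhuis tensor
`N_𝒥(x,y) = [𝒥x,𝒥y] - 𝒥[𝒥x,y] - 𝒥[x,𝒥y] - [x,y]` (skew-symmetrized brackets)
vanishes identically. -/

theorem stmt14 (E : Type*) [AddCommGroup E] [Module ℝ E]
    (ip : E → E → ℝ) (bracket : E → E → E) (D : E → E → E) (J : E →ₗ[ℝ] E)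
    -- pairing: symmetric, bilinear, nondegenerate
    (hipsymm : ∀ a b, ip a b = ip b a)
    (hipadd : ∀ a b c, ip (a + b) c = ip a c + ip b c)
    (hiplin : ∀ (r : ℝ) a b, ip (r • a) b = r * ip a b)
    (hipnondeg : ∀ a, (∀ b, ip a b = 0) → a = 0)
    -- the skew-symmetrized Courant bracket
    (hbrskew : ∀ a b, bracket a b = - bracket b a)
    (hbradd : ∀ a b c, bracket (a + b) c = bracket a c + bracket b c)
    -- 𝒥 is an orthogonal almost complex structure
    (hJ2 : ∀ a, J (J a) = -a)
    (hJorth : ∀ a b, ip (J a) (J b) = ip a b)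
    -- D is linear and preserves the pairing along itself
    (hDadd : ∀ a a' b, D (a + a') b = D a b + D a' b)
    (hDadd' : ∀ a b b', D a (b + b') = D a b + D a b')
    -- D𝒥 = 0
    (hDJ : ∀ a b, D a (J b) = J (D a b))
    -- the torsion of D
    (T : E → E → E → ℝ)
    (hT : ∀ a b c, T a b c
      = ip (D a b - D b a - bracket a b) c
        + (2:ℝ)⁻¹ * (ip (D c a) b - ip (D c b) a))
    -- T_D is of type (2,1)+(1,2)
    (htype : ∀ x y z,
      T (J x) (J y) z + T (J x) y (J z) + T x (J y) (J z) + T x y z = 0) :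
    ∀ x y, bracket (J x) (J y) - J (bracket (J x) y) - J (bracket x (J y))
      - bracket x y = 0 := by
    -- basic linearity facts for ip
  have ipneg : ∀ a b, ip (-a) b = -ip a b := by
    intro a b
    have := hiplin (-1) a b
    simpa using this
  have ipneg' : ∀ a b, ip a (-b) = -ip a b := by
    intro a b; rw [hipsymm, ipneg, hipsymm]
  have ipsub : ∀ a b c, ip (a - b) c = ip a c - ip b c := by
    intro a b c
    rw [sub_eq_add_neg, hipadd, ipneg]; ring
  have ipJ : ∀ a b, ip (J a) b = -ip a (J b) := by
    intro a b
    have h1 : ip (J a) (J (J b)) = ip a (J b) := hJorth a (J b)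
    rw [hJ2, ipneg'] at h1
    linarith
  have ipJJ : ∀ a b, ip a (J (J b)) = -ip a b := by
    intro a b; rw [hJ2, ipneg']
  -- bracket negation lemmas
  have br0 : ∀ b, bracket 0 b = 0 := by
    intro b
    have h := hbradd 0 0 b
    have h0 : bracket (0 : E) b = bracket 0 b + bracket 0 b := by
      simpa using h
    exact left_eq_add.mp h0
  have brneg : ∀ a b, bracket (-a) b = -bracket a b := by
    intro a b
    have h : bracket a b + bracket (-a) b = 0 := by
      rw [← hbradd]; simp [br0]
    exact (neg_eq_of_add_eq_zero_right h).symm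
  have brneg' : ∀ a b, bracket a (-b) = -bracket a b := by
    intro a b
    rw [hbrskew, brneg, hbrskew b a]; simp
  -- the key identity expressing ⟨N(a,b),c⟩ through torsion
  have key : ∀ a b c,
      ip (bracket (J a) (J b) - J (bracket (J a) b) - J (bracket a (J b))
        - bracket a b) c
      = -(T (J a) (J b) c + T (J a) b (J c) + T a (J b) (J c)) + T a b c := by
    intro a b c
    rw [hT, hT, hT, hT]
    simp only [ipsub, hDJ, ipJ, ipJJ]
    ring
  -- using the type condition: ⟨N(a,b),c⟩ = 2 T(a,b,c)
  have key2 : ∀ a b c,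
      ip (bracket (J a) (J b) - J (bracket (J a) b) - J (bracket a (J b))
        - bracket a b) c = 2 * T a b c := by
    intro a b c
    rw [key a b c]
    have := htype a b c
    linarith
  -- N(Ja,Jb) = -N(a,b)
  have hN1 : ∀ a b,
      bracket (J (J a)) (J (J b)) - J (bracket (J (J a)) (J b))
        - J (bracket (J a) (J (J b))) - bracket (J a) (J b)
      = -(bracket (J a) (J b) - J (bracket (J a) b) - J (bracket a (J b))
        - bracket a b) := by
    intro a b
    rw [hJ2, hJ2, brneg, brneg', brneg, brneg', map_neg, map_neg]
    abel
  -- N(Ja,b) = -J N(a,b)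
  have hN2 : ∀ a b,
      bracket (J (J a)) (J b) - J (bracket (J (J a)) b)
        - J (bracket (J a) (J b)) - bracket (J a) b
      = -(J (bracket (J a) (J b) - J (bracket (J a) b) - J (bracket a (J b))
        - bracket a b)) := by
    intro a b
    rw [hJ2, brneg, brneg, map_neg]
    simp [map_sub, hJ2]
    abel
  -- N(a,Jb) = -J N(a,b)
  have hN3 : ∀ a b,
      bracket (J a) (J (J b)) - J (bracket (J a) (J b))
        - J (bracket a (J (J b))) - bracket a (J b)
      = -(J (bracket (J a) (J b) - J (bracket (J a) b) - J (bracket a (J b))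
        - bracket a b)) := by
    intro a b
    rw [hJ2, brneg', brneg', map_neg]
    simp [map_sub, hJ2]
    abel
  intro x y
  apply hipnondeg
  intro c
  set N := bracket (J x) (J y) - J (bracket (J x) y) - J (bracket x (J y))
    - bracket x y with hNdef
  have e0 : ip N c = 2 * T x y c := key2 x y c
  have e1 : -ip N c = 2 * T (J x) (J y) c := by
    have := key2 (J x) (J y) c
    rw [hN1 x y, ← hNdef, ipneg] at this
    linarith
  have e2 : -ip N c = 2 * T (J x) y (J c) := by
    have := key2 (J x) y (J c)
    rw [hN2 x y, ← hNdef, ipneg, ipJ] at this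
    rw [ipJJ] at this
    linarith
  have e3 : -ip N c = 2 * T x (J y) (J c) := by
    have := key2 x (J y) (J c)
    rw [hN3 x y, ← hNdef, ipneg, ipJ] at this
    rw [ipJJ] at this
    linarith
  have ht := htype x y c
  linarith
end

section
/- Let (I, J, Q, F) satisfy J - I = Q∘F and F∘J + I*∘F = 0 pointwise on a manifold M, with F a closed 2-form and g = -(1/2)F(I+J) positive definite. Then with b = -(1/2)F(J-I), the subbundles L₊ = {X - i F(X) : X ∈ T^{1,0}_J} and L₋ = {X + i F(X) : X ∈ T^{1,0}_I} of (T ⊕ T*) ⊗ ℂ are involutive for the (untwisted) Courant bracket whenever I and J are integrable complex structures, since i_Y i_X dF = 0. -/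
/-!  STATEMENT 15:  Let `(I, J, Q, F)` satisfy `J - I = Q∘F` and `F∘J + I*∘F = 0`,
with `F` a closed 2-form.  Then the subbundles `L₊ = {X - iF(X) : X ∈ T^{1,0}_J}` and
`L₋ = {X + iF(X) : X ∈ T^{1,0}_I}` of `(T ⊕ T*) ⊗ ℂ` are involutive for the untwisted
Courant bracket whenever `I` and `J` are integrable, since `i_Y i_X dF = 0`.

Complexified vector fields are modelled as `ℂ`-derivations of the algebra `A` of
complex-valued smooth functions; the one-form part of the Courant bracket of
`(X,ξ)` and `(Y,η)` is `L_X η - i_Y dξ`, with value at `Z` equal to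
`X(ηZ) - η[X,Z] - (Y(ξZ) - Z(ξY) - ξ[Y,Z])`. -/

theorem stmt15 (A : Type*) [CommRing A] [Algebra ℂ A]
    (I J : Derivation ℂ A A → Derivation ℂ A A)
    (Q : (Derivation ℂ A A → A) → Derivation ℂ A A)
    (F : Derivation ℂ A A → Derivation ℂ A A → A)
    -- I, J are (complexified) complex structure tensors
    (hI2 : ∀ X, I (I X) = -X) (hJ2 : ∀ X, J (J X) = -X)
    (hIlin : ∀ (a : A) X, I (a • X) = a • I X)
    (hJlin : ∀ (a : A) X, J (a • X) = a • J X)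
    (hIadd : ∀ X Y, I (X + Y) = I X + I Y)
    (hJadd : ∀ X Y, J (X + Y) = J X + J Y)
    -- F is a 2-form
    (hFskew : ∀ X Y, F X Y = - F Y X)
    (hFadd : ∀ X X' Y, F (X + X') Y = F X Y + F X' Y)
    (hFlin : ∀ (a : A) X Y, F (a • X) Y = a * F X Y)
    -- ... which is closed: dF = 0
    (hFclosed : ∀ X Y Z,
      X (F Y Z) - Y (F X Z) + Z (F X Y)
        - F ⁅X, Y⁆ Z + F ⁅X, Z⁆ Y - F ⁅Y, Z⁆ X = 0)
    -- Q is a skew bivector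
    (hQskew : ∀ ξ η : Derivation ℂ A A → A, ξ (Q η) = - η (Q ξ))
    -- the algebraic relations:  J - I = Q∘F  and  F∘J + I*∘F = 0
    (hJI : ∀ X, J X - I X = Q (fun Z => F X Z))
    (hFJ : ∀ X Y, F (J X) Y + F X (I Y) = 0)
    -- integrability of I and J: T^{1,0} is closed under the Lie bracket
    (hIint : ∀ X Y, I X = algebraMap ℂ A Complex.I • X →
      I Y = algebraMap ℂ A Complex.I • Y → I ⁅X, Y⁆ = algebraMap ℂ A Complex.I • ⁅X, Y⁆)
    (hJint : ∀ X Y, J X = algebraMap ℂ A Complex.I • X →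
      J Y = algebraMap ℂ A Complex.I • Y → J ⁅X, Y⁆ = algebraMap ℂ A Complex.I • ⁅X, Y⁆) :
    -- L₊ is involutive:
    (∀ X Y, J X = algebraMap ℂ A Complex.I • X → J Y = algebraMap ℂ A Complex.I • Y →
      J ⁅X, Y⁆ = algebraMap ℂ A Complex.I • ⁅X, Y⁆ ∧
      ∀ Z, X (-(algebraMap ℂ A Complex.I * F Y Z))
          - (-(algebraMap ℂ A Complex.I * F Y ⁅X, Z⁆))
          - (Y (-(algebraMap ℂ A Complex.I * F X Z))
              - Z (-(algebraMap ℂ A Complex.I * F X Y))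
              - (-(algebraMap ℂ A Complex.I * F X ⁅Y, Z⁆)))
        = -(algebraMap ℂ A Complex.I * F ⁅X, Y⁆ Z)) ∧
    -- and L₋ is involutive:
    (∀ X Y, I X = algebraMap ℂ A Complex.I • X → I Y = algebraMap ℂ A Complex.I • Y →
      I ⁅X, Y⁆ = algebraMap ℂ A Complex.I • ⁅X, Y⁆ ∧
      ∀ Z, X (algebraMap ℂ A Complex.I * F Y Z)
          - (algebraMap ℂ A Complex.I * F Y ⁅X, Z⁆)
          - (Y (algebraMap ℂ A Complex.I * F X Z)
              - Z (algebraMap ℂ A Complex.I * F X Y)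
              - (algebraMap ℂ A Complex.I * F X ⁅Y, Z⁆))
        = algebraMap ℂ A Complex.I * F ⁅X, Y⁆ Z) := by
  have key : ∀ (X : Derivation ℂ A A) (t : A),
      X (algebraMap ℂ A Complex.I * t) = algebraMap ℂ A Complex.I * X t := by
    intro X t
    rw [Derivation.leibniz]
    simp [smul_eq_mul, mul_comm]
  set c : A := algebraMap ℂ A Complex.I with hc
  constructor
  · intro X Y hX hY
    refine ⟨hJint X Y hX hY, fun Z => ?_⟩
    have h := hFclosed X Y Z
    have k1 := key X (F Y Z)
    have k2 := key Y (F X Z)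
    have k3 := key Z (F X Y)
    have s1 := hFskew ⁅X, Z⁆ Y
    have s2 := hFskew ⁅Y, Z⁆ X
    simp only [map_neg]
    linear_combination (-c) * h + c * s1 - c * s2 - k1 + k2 - k3
  · intro X Y hX hY
    refine ⟨hIint X Y hX hY, fun Z => ?_⟩
    have h := hFclosed X Y Z
    have k1 := key X (F Y Z)
    have k2 := key Y (F X Z)
    have k3 := key Z (F X Y)
    have s1 := hFskew ⁅X, Z⁆ Y
    have s2 := hFskew ⁅Y, Z⁆ X
    linear_combination c * h - c * s1 + c * s2 + k1 - k2 + k3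
end
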